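/- For integers n ≥ 1 and M, m with 0 ≤ m < M ≤ n and r_{2n} = m, the cyclic ±1 sequence (running count sequence) of length 2n with n increments and n decrements, maximum M, and minimum m given by [m+1, m+2, ..., M-1, M, M-1, M, ..., M, M-1, M-2, ..., m+1, m] (first rising from m+1 to M, then alternating M-1, M for 2(n-M+m) terms counted appropriately, then descending from M-1 down to m) attains the sum (M+m)(M-m) + (2M-1)(n-M+m), and this sum is maximal among all such sequences. -/

import Mathlib

private lemma updown_card_eq (N : ℕ) (r : ℕ → ℤ)
    (hstep : ∀ i ∈ Finset.Icc 1 N, r i = r (i-1) + 1 ∨ r i = r (i-1) - 1)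
    (hcyc : r 0 = r N) (x : ℤ) :
    ((Finset.Icc 1 N).filter (fun i => r (i-1) = x + 1 ∧ r i = x)).card
      = ((Finset.Icc 1 N).filter (fun i => r (i-1) = x ∧ r i = x + 1)).card := by
  classical
  have key : ∑ i ∈ Finset.Icc 1 N,
      ((if r (i-1) = x ∧ r i = x + 1 then (1:ℤ) else 0)
        - (if r (i-1) = x + 1 ∧ r i = x then (1:ℤ) else 0))
      = 0 := by
    have h2 : ∀ i ∈ Finset.Icc 1 N,
        (if r (i-1) = x ∧ r i = x + 1 then (1:ℤ) else 0)
          - (if r (i-1) = x + 1 ∧ r i = x then (1:ℤ) else 0)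
        = (if x + 1 ≤ r i then (1:ℤ) else 0) - (if x + 1 ≤ r (i-1) then (1:ℤ) else 0) := by
      intro i hi
      rcases hstep i hi with h | h <;>
        · split_ifs with h1 h2 h3 <;> first | rfl | omega
    rw [Finset.sum_congr rfl h2]
    have h3 : ∀ g : ℕ → ℤ, ∑ i ∈ Finset.Icc 1 N, (g i - g (i-1)) = g N - g 0 := by
      intro g
      rw [show Finset.Icc 1 N = Finset.Ico 1 (N+1) from (Finset.Ico_add_one_right_eq_Icc 1 N).symm,
        Finset.sum_Ico_eq_sum_range]
      rw [show N + 1 - 1 = N from by omega]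
      have h4 : ∀ j ∈ Finset.range N, g (1 + j) - g (1 + j - 1) = g (j+1) - g j := by
        intro j _
        rw [show 1 + j - 1 = j from by omega, show 1 + j = j + 1 from by omega]
      rw [Finset.sum_congr rfl h4]
      exact Finset.sum_range_sub g N
    rw [h3 (fun i => if x + 1 ≤ r i then (1:ℤ) else 0)]
    simp only [hcyc]
    ring
  rw [Finset.sum_sub_distrib, Finset.sum_boole, Finset.sum_boole] at key
  have h5 := sub_eq_zero.mp key
  exact_mod_cast h5.symm

private lemma exists_down (N : ℕ) (r : ℕ → ℤ)
    (hstep : ∀ i ∈ Finset.Icc 1 N, r i = r (i-1) + 1 ∨ r i = r (i-1) - 1)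
    (x : ℤ) (i0 : ℕ) (hi0 : i0 ∈ Finset.Icc 1 N) (hx0 : x + 1 ≤ r i0) (hxN : r N ≤ x) :
    ∃ i ∈ Finset.Icc 1 N, r (i-1) = x + 1 ∧ r i = x := by
  by_contra hcon
  push_neg at hcon
  simp only [Finset.mem_Icc] at hi0
  have key : ∀ t, i0 ≤ t → t ≤ N → x + 1 ≤ r t := by
    intro t ht
    induction t, ht using Nat.le_induction with
    | base => intro _; exact hx0
    | succ t ht ih =>
      intro htN
      have h1 : x + 1 ≤ r t := ih (by omega)
      have hmem : t + 1 ∈ Finset.Icc 1 N := by simp only [Finset.mem_Icc]; omega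
      have hcon' := hcon (t+1) hmem
      have hs := hstep (t+1) hmem
      rw [show t + 1 - 1 = t from by omega] at hcon' hs
      rcases hs with h | h
      · omega
      · by_cases hq : r t = x + 1
        · exact absurd (hcon' hq) (by omega)
        · omega
  have := key N (by omega) le_rfl
  omega
private lemma max_bound (n M m d : ℕ) (hMd : M = m + d) (hd1 : 1 ≤ d) (r : ℕ → ℤ)
    (hstep : ∀ i ∈ Finset.Icc 1 (2*n), r i = r (i-1) + 1 ∨ r i = r (i-1) - 1)
    (hcyc : r 0 = r (2*n))
    (hub : ∀ i ∈ Finset.Icc 1 (2*n), r i ≤ (M:ℤ))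
    (hmaxEx : ∃ i ∈ Finset.Icc 1 (2*n), r i = (M:ℤ))
    (hlb : ∀ i ∈ Finset.Icc 1 (2*n), (m:ℤ) ≤ r i)
    (hlast : r (2*n) = (m:ℤ)) :
    ∑ i ∈ Finset.Icc 1 (2*n), r i
      ≤ 2*(n:ℤ)*m + d*(2*n) - d*((d:ℤ)-1) - n := by
  classical
  have hr0 : r 0 = (m:ℤ) := by rw [hcyc]; exact hlast
  have hbprev : ∀ i ∈ Finset.Icc 1 (2*n), (m:ℤ) ≤ r (i-1) ∧ r (i-1) ≤ (M:ℤ) := by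
    intro i hi
    simp only [Finset.mem_Icc] at hi
    by_cases h : i = 1
    · subst h
      rw [show (1:ℕ) - 1 = 0 from rfl, hr0]
      refine ⟨le_rfl, by omega⟩
    · have hm : i - 1 ∈ Finset.Icc 1 (2*n) := by simp only [Finset.mem_Icc]; omega
      exact ⟨hlb _ hm, hub _ hm⟩
  set f : ℕ → ℕ :=
    fun i => if r i = r (i-1) + 1 then (r (i-1) - (m:ℤ)).toNat else (r i - (m:ℤ)).toNat with hf
  set c : ℕ → ℕ := fun j =>
    ((Finset.Icc 1 (2*n)).filter (fun i => r (i-1) = (m:ℤ)+j ∧ r i = (m:ℤ)+j+1)).card with hc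
  have hcup : ∀ j : ℕ,
      ((Finset.Icc 1 (2*n)).filter (fun i => r (i-1) = (m:ℤ)+j ∧ r i = (m:ℤ)+j+1)).card = c j := by
    intro j; rw [hc]
  have hud : ∀ j : ℕ,
      ((Finset.Icc 1 (2*n)).filter (fun i => r (i-1) = (m:ℤ)+j+1 ∧ r i = (m:ℤ)+j)).card = c j := by
    intro j
    rw [← hcup j]
    exact updown_card_eq (2*n) r hstep hcyc ((m:ℤ)+j)
  have hfib_eq : ∀ j : ℕ, (Finset.Icc 1 (2*n)).filter (fun i => f i = j)
      = ((Finset.Icc 1 (2*n)).filter (fun i => r (i-1) = (m:ℤ)+j ∧ r i = (m:ℤ)+j+1))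
        ∪ ((Finset.Icc 1 (2*n)).filter (fun i => r (i-1) = (m:ℤ)+j+1 ∧ r i = (m:ℤ)+j)) := by
    intro j
    ext i
    simp only [Finset.mem_filter, Finset.mem_union, hf]
    constructor
    · rintro ⟨hi, hfi⟩
      have hbp := hbprev i hi
      have hbl := hlb i hi
      rcases hstep i hi with h | h
      · rw [if_pos h] at hfi
        exact Or.inl ⟨hi, by omega, by omega⟩
      · rw [if_neg (by omega)] at hfi
        exact Or.inr ⟨hi, by omega, by omega⟩
    · rintro (⟨hi, h1, h2⟩ | ⟨hi, h1, h2⟩)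
      · refine ⟨hi, ?_⟩; rw [if_pos (by omega)]; omega
      · refine ⟨hi, ?_⟩; rw [if_neg (by omega)]; omega
  have hdisjUD : ∀ j : ℕ,
      Disjoint ((Finset.Icc 1 (2*n)).filter (fun i => r (i-1) = (m:ℤ)+j ∧ r i = (m:ℤ)+j+1))
        ((Finset.Icc 1 (2*n)).filter (fun i => r (i-1) = (m:ℤ)+j+1 ∧ r i = (m:ℤ)+j)) := by
    intro j; rw [Finset.disjoint_left]; intro i h1 h2
    simp only [Finset.mem_filter] at h1 h2
    omega
  have hfib_card : ∀ j : ℕ, ((Finset.Icc 1 (2*n)).filter (fun i => f i = j)).card = 2 * c j := by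
    intro j
    rw [hfib_eq j, Finset.card_union_of_disjoint (hdisjUD j), hud j, hcup j]
    omega
  have hmemf : ∀ i ∈ Finset.Icc 1 (2*n), f i ∈ Finset.range d := by
    intro i hi
    have hbp := hbprev i hi
    have hu := hub i hi
    have hl := hlb i hi
    simp only [Finset.mem_range, hf]
    rcases hstep i hi with h | h
    · rw [if_pos h]; omega
    · rw [if_neg (by omega)]; omega
  have htot : ∑ j ∈ Finset.range d, 2 * c j = 2*n := by
    calc ∑ j ∈ Finset.range d, 2 * c j
        = ∑ j ∈ Finset.range d, ((Finset.Icc 1 (2*n)).filter (fun i => f i = j)).card := by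
          refine Finset.sum_congr rfl fun j _ => ?_; rw [hfib_card j]
      _ = (Finset.Icc 1 (2*n)).card := (Finset.card_eq_sum_card_fiberwise hmemf).symm
      _ = 2*n := by rw [Nat.card_Icc]; omega
  have hctot : ∑ j ∈ Finset.range d, c j = n := by
    have h2 : 2 * ∑ j ∈ Finset.range d, c j = 2 * n := by
      rw [Finset.mul_sum]; exact htot
    omega
  have hcpos : ∀ j, j < d → 1 ≤ c j := by
    intro j hj
    obtain ⟨i0, hi0, hri0⟩ := hmaxEx
    obtain ⟨i, hi, h1, h2⟩ := exists_down (2*n) r hstep ((m:ℤ)+j) i0 hi0 (by omega)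
      (by rw [hlast]; omega)
    have hmem : i ∈ (Finset.Icc 1 (2*n)).filter
        (fun i => r (i-1) = (m:ℤ)+j+1 ∧ r i = (m:ℤ)+j) := by
      simp only [Finset.mem_filter]; exact ⟨hi, h1, h2⟩
    have hpos := Finset.card_pos.mpr ⟨i, hmem⟩
    rw [hud j] at hpos
    omega
  have hBbound : ∀ j, j < d →
      2 * (∑ j' ∈ Finset.range j, c j') + c j
        ≤ ((Finset.Icc 1 (2*n)).filter (fun i => r i ≤ (m:ℤ)+j)).card := by
    intro j hj
    have hmemfB : ∀ i ∈ (Finset.Icc 1 (2*n)).filter (fun i => r i ≤ (m:ℤ)+j),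
        f i ∈ Finset.range (j+1) := by
      intro i hi
      rw [Finset.mem_filter] at hi
      obtain ⟨hi1, hi2⟩ := hi
      have hbp := hbprev i hi1
      have hbl := hlb i hi1
      simp only [Finset.mem_range, hf]
      rcases hstep i hi1 with h | h
      · rw [if_pos h]; omega
      · rw [if_neg (by omega)]; omega
    have hcard := Finset.card_eq_sum_card_fiberwise hmemfB
    rw [Finset.sum_range_succ] at hcard
    have hfull : ∀ j' ∈ Finset.range j,
        (((Finset.Icc 1 (2*n)).filter (fun i => r i ≤ (m:ℤ)+j)).filter
          (fun i => f i = j')).card = 2 * c j' := by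
      intro j' hj'
      simp only [Finset.mem_range] at hj'
      have heq : ((Finset.Icc 1 (2*n)).filter (fun i => r i ≤ (m:ℤ)+j)).filter
          (fun i => f i = j') = (Finset.Icc 1 (2*n)).filter (fun i => f i = j') := by
        rw [Finset.filter_filter]
        ext i
        simp only [Finset.mem_filter]
        constructor
        · rintro ⟨hi, _, h2⟩; exact ⟨hi, h2⟩
        · rintro ⟨hi, h2⟩
          refine ⟨hi, ?_, h2⟩
          have hin : i ∈ (Finset.Icc 1 (2*n)).filter (fun i => f i = j') :=
            Finset.mem_filter.mpr ⟨hi, h2⟩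
          rw [hfib_eq j'] at hin
          simp only [Finset.mem_union, Finset.mem_filter] at hin
          rcases hin with ⟨_, _, h4⟩ | ⟨_, _, h4⟩ <;> omega
      rw [heq, hfib_card]
    rw [Finset.sum_congr rfl hfull] at hcard
    have hdown : ((Finset.Icc 1 (2*n)).filter (fun i => r (i-1) = (m:ℤ)+j+1 ∧ r i = (m:ℤ)+j))
        ⊆ ((Finset.Icc 1 (2*n)).filter (fun i => r i ≤ (m:ℤ)+j)).filter (fun i => f i = j) := by
      intro i hi
      simp only [Finset.mem_filter] at hi
      obtain ⟨hi1, h1, h2⟩ := hi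
      simp only [Finset.mem_filter, hf]
      refine ⟨⟨hi1, by omega⟩, ?_⟩
      rw [if_neg (by omega)]; omega
    have hdcard : c j ≤ (((Finset.Icc 1 (2*n)).filter (fun i => r i ≤ (m:ℤ)+j)).filter
        (fun i => f i = j)).card := by
      rw [← hud j]; exact Finset.card_le_card hdown
    have hms : 2 * (∑ j' ∈ Finset.range j, c j') = ∑ j' ∈ Finset.range j, 2 * c j' := by
      rw [Finset.mul_sum]
    omega
  have hTB : ∀ j : ℕ, ((Finset.Icc 1 (2*n)).filter (fun i => (m:ℤ)+j < r i)).card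
      + ((Finset.Icc 1 (2*n)).filter (fun i => r i ≤ (m:ℤ)+j)).card = 2*n := by
    intro j
    have h0 := Finset.card_filter_add_card_filter_not
      (s := Finset.Icc 1 (2*n)) (p := fun i => (m:ℤ)+j < r i)
    have hneg : (Finset.Icc 1 (2*n)).filter (fun i => ¬((m:ℤ)+j < r i))
        = (Finset.Icc 1 (2*n)).filter (fun i => r i ≤ (m:ℤ)+j) := by
      refine Finset.filter_congr fun i _ => ?_
      simp [not_lt]
    rw [hneg, Nat.card_Icc] at h0
    omega
  have hpoint : ∀ i ∈ Finset.Icc 1 (2*n),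
      r i = (m:ℤ) + ∑ j ∈ Finset.range d, (if (m:ℤ)+j < r i then (1:ℤ) else 0) := by
    intro i hi
    have h1 := hlb i hi
    have h2 := hub i hi
    have hfil : (Finset.range d).filter (fun j : ℕ => (m:ℤ)+j < r i)
        = Finset.range ((r i - m).toNat) := by
      ext j
      simp only [Finset.mem_filter, Finset.mem_range]
      omega
    rw [Finset.sum_boole, hfil, Finset.card_range]
    omega
  have hsum_split : ∑ i ∈ Finset.Icc 1 (2*n), r i
      = 2*(n:ℤ)*m + ∑ j ∈ Finset.range d,
          (((Finset.Icc 1 (2*n)).filter (fun i => (m:ℤ)+j < r i)).card : ℤ) := by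
    calc ∑ i ∈ Finset.Icc 1 (2*n), r i
        = ∑ i ∈ Finset.Icc 1 (2*n),
            ((m:ℤ) + ∑ j ∈ Finset.range d, (if (m:ℤ)+j < r i then (1:ℤ) else 0)) :=
          Finset.sum_congr rfl hpoint
      _ = ((Finset.Icc 1 (2*n)).card : ℤ) * (m:ℤ)
          + ∑ i ∈ Finset.Icc 1 (2*n), ∑ j ∈ Finset.range d,
              (if (m:ℤ)+j < r i then (1:ℤ) else 0) := by
          rw [Finset.sum_add_distrib, Finset.sum_const, nsmul_eq_mul]
      _ = 2*(n:ℤ)*m + ∑ j ∈ Finset.range d, ∑ i ∈ Finset.Icc 1 (2*n),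
              (if (m:ℤ)+j < r i then (1:ℤ) else 0) := by
          rw [Finset.sum_comm, Nat.card_Icc, show 2*n+1-1 = 2*n from by omega]
          push_cast
          ring
      _ = 2*(n:ℤ)*m + ∑ j ∈ Finset.range d,
            (((Finset.Icc 1 (2*n)).filter (fun i => (m:ℤ)+j < r i)).card : ℤ) := by
          congr 1
          exact Finset.sum_congr rfl fun j _ => Finset.sum_boole _ _
  have hTsum : (∑ j ∈ Finset.range d,
      ((Finset.Icc 1 (2*n)).filter (fun i => (m:ℤ)+j < r i)).card) + (d*(d-1) + n)
      ≤ d * (2*n) := by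
    have step1 : ∀ j ∈ Finset.range d,
        ((Finset.Icc 1 (2*n)).filter (fun i => (m:ℤ)+j < r i)).card
          + (2 * (∑ j' ∈ Finset.range j, c j') + c j) ≤ 2*n := by
      intro j hj
      simp only [Finset.mem_range] at hj
      have hB := hBbound j hj
      have hT := hTB j
      omega
    have step2 := Finset.sum_le_sum step1
    rw [Finset.sum_add_distrib, Finset.sum_const, Finset.card_range, smul_eq_mul] at step2
    have key2 : d*(d-1) + n ≤ ∑ j ∈ Finset.range d,
        (2 * (∑ j' ∈ Finset.range j, c j') + c j) := by
      have e1 : ∀ j ∈ Finset.range d, 2 * (∑ j' ∈ Finset.range j, c j') + c j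
          = (∑ j' ∈ Finset.range j, c j') + (∑ j' ∈ Finset.range (j+1), c j') := by
        intro j _
        rw [Finset.sum_range_succ]
        ring
      rw [Finset.sum_congr rfl e1, Finset.sum_add_distrib]
      have l1 : ∑ j ∈ Finset.range d, j
          ≤ ∑ j ∈ Finset.range d, (∑ j' ∈ Finset.range j, c j') := by
        refine Finset.sum_le_sum fun j hj => ?_
        simp only [Finset.mem_range] at hj
        calc j = ∑ j' ∈ Finset.range j, 1 := by simp
          _ ≤ ∑ j' ∈ Finset.range j, c j' := by
              refine Finset.sum_le_sum fun j' hj' => ?_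
              simp only [Finset.mem_range] at hj'
              exact hcpos j' (by omega)
      have l2 : (∑ j ∈ Finset.range (d-1), (j+1)) + n
          ≤ ∑ j ∈ Finset.range d, (∑ j' ∈ Finset.range (j+1), c j') := by
        obtain ⟨e, rfl⟩ : ∃ e, d = e + 1 := ⟨d - 1, by omega⟩
        rw [Finset.sum_range_succ, show e + 1 - 1 = e from by omega]
        have l2a : ∑ j ∈ Finset.range e, (j+1)
            ≤ ∑ j ∈ Finset.range e, (∑ j' ∈ Finset.range (j+1), c j') := by
          refine Finset.sum_le_sum fun j hj => ?_
          simp only [Finset.mem_range] at hj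
          calc j+1 = ∑ j' ∈ Finset.range (j+1), 1 := by simp
            _ ≤ ∑ j' ∈ Finset.range (j+1), c j' := by
                refine Finset.sum_le_sum fun j' hj' => ?_
                simp only [Finset.mem_range] at hj'
                exact hcpos j' (by omega)
        have l2b : (∑ j' ∈ Finset.range (e+1), c j') = n := hctot
        omega
      have g1 : (∑ j ∈ Finset.range d, j) * 2 = d * (d-1) := Finset.sum_range_id_mul_two d
      have g2 : ∑ j ∈ Finset.range (d-1), (j+1) = ∑ j ∈ Finset.range d, j := by
        obtain ⟨e, rfl⟩ : ∃ e, d = e + 1 := ⟨d - 1, by omega⟩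
        rw [Finset.sum_range_succ' (fun j => j) e, show e + 1 - 1 = e from by omega]
        omega
      omega
    omega
  rw [hsum_split, ← Nat.cast_sum]
  have hcast : ((∑ j ∈ Finset.range d,
      ((Finset.Icc 1 (2*n)).filter (fun i => (m:ℤ)+j < r i)).card : ℕ) : ℤ)
      ≤ (d:ℤ) * (2*(n:ℤ)) - ((d:ℤ)*((d:ℤ)-1) + (n:ℤ)) := by
    have h1 := (Nat.cast_le (α := ℤ)).mpr hTsum
    push_cast [Nat.cast_sub hd1] at h1
    push_cast
    linarith
  linarith
theorem maximal_running_count_sequence (n M m : ℕ) (hmM : m < M) (hMn : M ≤ n)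
    (r' : ℕ → ℤ)
    (hr' : ∀ i, r' i =
      if i ≤ M - m then (m : ℤ) + i
      else if i ≤ (M - m) + 2*(n - M + m) then (M : ℤ) - (((i - (M - m)) % 2 : ℕ) : ℤ)
      else (M : ℤ) - ((i - ((M - m) + 2*(n - M + m)) : ℕ) : ℤ)) :
    -- validity of r' as a running count sequence
    (∀ i ∈ Finset.Icc 1 (2*n), r' i = r' (i-1) + 1 ∨ r' i = r' (i-1) - 1) ∧
    ((Finset.Icc 1 (2*n)).filter fun i => r' i = r' (i-1) + 1).card = n ∧
    (∀ i ∈ Finset.Icc 1 (2*n), r' i ≤ (M : ℤ)) ∧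
    (∃ i ∈ Finset.Icc 1 (2*n), r' i = (M : ℤ)) ∧
    (∀ i ∈ Finset.Icc 1 (2*n), (m : ℤ) ≤ r' i) ∧
    r' (2*n) = (m : ℤ) ∧
    -- its sum attains the claimed value
    (∑ i ∈ Finset.Icc 1 (2*n), r' i
        = ((M : ℤ)+m)*((M : ℤ)-m) + (2*(M : ℤ)-1)*((n : ℤ)-M+m)) ∧
    -- and this sum is maximal among all valid running count sequences
    (∀ r : ℕ → ℤ,
      (∀ i ∈ Finset.Icc 1 (2*n), r i = r (i-1) + 1 ∨ r i = r (i-1) - 1) →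
      ((Finset.Icc 1 (2*n)).filter fun i => r i = r (i-1) + 1).card = n →
      r 0 = r (2*n) →
      (∀ i ∈ Finset.Icc 1 (2*n), r i ≤ (M : ℤ)) →
      (∃ i ∈ Finset.Icc 1 (2*n), r i = (M : ℤ)) →
      (∀ i ∈ Finset.Icc 1 (2*n), (m : ℤ) ≤ r i) →
      (∃ i ∈ Finset.Icc 1 (2*n), r i = (m : ℤ)) →
      r (2*n) = (m : ℤ) →
      ∑ i ∈ Finset.Icc 1 (2*n), r i ≤ ∑ i ∈ Finset.Icc 1 (2*n), r' i) := by
  obtain ⟨d, hdMm⟩ : ∃ d, M - m = d := ⟨_, rfl⟩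
  obtain ⟨k, hkdef⟩ : ∃ k, n - M + m = k := ⟨_, rfl⟩
  simp only [hdMm, hkdef] at hr'
  have hd1 : 1 ≤ d := by omega
  have hMd : M = m + d := by omega
  have hnk : n = d + k := by omega
  have h2n : 2*n = d + 2*k + d := by omega
  have hA : ∀ i, i ≤ d → r' i = (m:ℤ) + i := by
    intro i h; rw [hr' i, if_pos h]
  have hB : ∀ i, d < i → i ≤ d + 2*k → r' i = (M:ℤ) - (((i - d) % 2 : ℕ) : ℤ) := by
    intro i h1 h2; rw [hr' i, if_neg (by omega), if_pos h2]
  have hC : ∀ i, d + 2*k < i → r' i = (M:ℤ) - ((i - (d + 2*k) : ℕ) : ℤ) := by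
    intro i h1; rw [hr' i, if_neg (by omega), if_neg (by omega)]
  have hstep' : ∀ i, 1 ≤ i → i ≤ 2*n →
      (if i ≤ d ∨ (d < i ∧ i ≤ d + 2*k ∧ (i - d) % 2 = 0)
        then r' i = r' (i-1) + 1 else r' i = r' (i-1) - 1) := by
    intro i hi1 hi2
    split_ifs with hcond
    · rcases hcond with h | ⟨h1, h2, h3⟩
      · rw [hA i h, hA (i-1) (by omega)]; omega
      · rw [hB i h1 h2, hB (i-1) (by omega) (by omega)]; omega
    · push_neg at hcond
      obtain ⟨h1, h2⟩ := hcond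
      replace h1 : d < i := by omega
      rcases le_or_gt i (d + 2*k) with h3 | h3
      · have h4 : (i - d) % 2 = 1 := by
          have := h2 h1 h3
          omega
        rcases Nat.lt_or_ge d (i-1) with h5 | h5
        · rw [hB i h1 h3, hB (i-1) h5 (by omega)]; omega
        · rw [hB i h1 h3, hA (i-1) (by omega)]; omega
      · rcases Nat.lt_or_ge (d + 2*k) (i-1) with h5 | h5
        · rw [hC i h3, hC (i-1) h5]; omega
        · rcases Nat.eq_zero_or_pos k with hk0 | hk0
          · rw [hC i h3, hA (i-1) (by omega)]; omega
          · rw [hC i h3, hB (i-1) (by omega) (by omega)]; omega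
  have hstepmem : ∀ i ∈ Finset.Icc 1 (2*n), r' i = r' (i-1) + 1 ∨ r' i = r' (i-1) - 1 := by
    intro i hi
    simp only [Finset.mem_Icc] at hi
    have h := hstep' i hi.1 hi.2
    split_ifs at h with hcond
    · exact Or.inl h
    · exact Or.inr h
  have hups : ((Finset.Icc 1 (2*n)).filter fun i => r' i = r' (i-1) + 1).card = n := by
    have hset : ((Finset.Icc 1 (2*n)).filter fun i => r' i = r' (i-1) + 1)
        = Finset.Icc 1 d ∪ (Finset.Icc 1 k).image (fun t => d + 2*t) := by
      ext i
      simp only [Finset.mem_filter, Finset.mem_union, Finset.mem_Icc, Finset.mem_image]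
      constructor
      · rintro ⟨⟨hi1, hi2⟩, hup⟩
        have hs := hstep' i hi1 hi2
        split_ifs at hs with hcond
        · rcases hcond with h | ⟨h1, h2, h3⟩
          · exact Or.inl ⟨hi1, h⟩
          · exact Or.inr ⟨(i - d)/2, ⟨by omega, by omega⟩, by omega⟩
        · exfalso; rw [hup] at hs; omega
      · rintro (⟨h1, h2⟩ | ⟨t, ⟨ht1, ht2⟩, rfl⟩)
        · have hs := hstep' i h1 (by omega)
          rw [if_pos (Or.inl h2)] at hs
          exact ⟨⟨h1, by omega⟩, hs⟩
        · have hs := hstep' (d + 2*t) (by omega) (by omega)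
          rw [if_pos (Or.inr ⟨by omega, by omega, by omega⟩)] at hs
          exact ⟨⟨by omega, by omega⟩, hs⟩
    have hinj : Function.Injective (fun t : ℕ => d + 2*t) := by
      intro a b hab
      simp only at hab
      omega
    have hdisj : Disjoint (Finset.Icc 1 d) ((Finset.Icc 1 k).image (fun t => d + 2*t)) := by
      rw [Finset.disjoint_left]
      intro i hi hi2
      simp only [Finset.mem_Icc] at hi
      simp only [Finset.mem_image, Finset.mem_Icc] at hi2
      obtain ⟨t, ⟨ht1, _⟩, rfl⟩ := hi2
      omega
    rw [hset, Finset.card_union_of_disjoint hdisj, Finset.card_image_of_injective _ hinj,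
      Nat.card_Icc, Nat.card_Icc]
    omega
  have hub' : ∀ i ∈ Finset.Icc 1 (2*n), r' i ≤ (M:ℤ) := by
    intro i hi
    simp only [Finset.mem_Icc] at hi
    rcases le_or_gt i d with h | h
    · rw [hA i h]; omega
    · rcases le_or_gt i (d + 2*k) with h2 | h2
      · rw [hB i h h2]; omega
      · rw [hC i h2]; omega
  have hlb' : ∀ i ∈ Finset.Icc 1 (2*n), (m:ℤ) ≤ r' i := by
    intro i hi
    simp only [Finset.mem_Icc] at hi
    rcases le_or_gt i d with h | h
    · rw [hA i h]; omega
    · rcases le_or_gt i (d + 2*k) with h2 | h2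
      · rw [hB i h h2]; omega
      · rw [hC i h2]; omega
  have hex : ∃ i ∈ Finset.Icc 1 (2*n), r' i = (M:ℤ) := by
    refine ⟨d, by simp only [Finset.mem_Icc]; omega, ?_⟩
    rw [hA d le_rfl]; omega
  have hlast' : r' (2*n) = (m:ℤ) := by
    rw [hC (2*n) (by omega)]; omega
  have hsum : ∑ i ∈ Finset.Icc 1 (2*n), r' i
      = ((M:ℤ)+m)*((M:ℤ)-m) + (2*(M:ℤ)-1)*((n:ℤ)-M+m) := by
    have e1 : Finset.Icc 1 (2*n) = Finset.Ico 1 (2*n+1) := (Finset.Ico_add_one_right_eq_Icc 1 (2*n)).symm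
    have e2 : (∑ i ∈ Finset.Ico 1 (d+1), r' i) + (∑ i ∈ Finset.Ico (d+1) (d+2*k+1), r' i)
        = ∑ i ∈ Finset.Ico 1 (d+2*k+1), r' i :=
      Finset.sum_Ico_consecutive _ (by omega) (by omega)
    have e3 : (∑ i ∈ Finset.Ico 1 (d+2*k+1), r' i)
        + (∑ i ∈ Finset.Ico (d+2*k+1) (2*n+1), r' i)
        = ∑ i ∈ Finset.Ico 1 (2*n+1), r' i :=
      Finset.sum_Ico_consecutive _ (by omega) (by omega)
    have p1 : ∑ i ∈ Finset.Ico 1 (d+1), r' i = ∑ j ∈ Finset.range d, r' (1+j) := by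
      rw [Finset.sum_Ico_eq_sum_range, show d+1-1 = d from by omega]
    have p2 : ∑ i ∈ Finset.Ico (d+1) (d+2*k+1), r' i
        = ∑ j ∈ Finset.range (2*k), r' (d+1+j) := by
      rw [Finset.sum_Ico_eq_sum_range, show d+2*k+1-(d+1) = 2*k from by omega]
    have p3 : ∑ i ∈ Finset.Ico (d+2*k+1) (2*n+1), r' i
        = ∑ j ∈ Finset.range d, r' (d+2*k+1+j) := by
      rw [Finset.sum_Ico_eq_sum_range, show 2*n+1-(d+2*k+1) = d from by omega]
    have q13 : ∀ j ∈ Finset.range d, r' (1+j) + r' (d+2*k+1+j) = (m:ℤ) + M := by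
      intro j hj
      simp only [Finset.mem_range] at hj
      rw [hA (1+j) (by omega), hC (d+2*k+1+j) (by omega)]
      omega
    have S13 : (∑ j ∈ Finset.range d, r' (1+j)) + (∑ j ∈ Finset.range d, r' (d+2*k+1+j))
        = (d:ℤ)*((m:ℤ)+M) := by
      rw [← Finset.sum_add_distrib, Finset.sum_congr rfl q13, Finset.sum_const,
        Finset.card_range, nsmul_eq_mul]
    have q2 : ∀ j ∈ Finset.range (2*k), r' (d+1+j) = (M:ℤ) - (((1+j) % 2 : ℕ) : ℤ) := by
      intro j hj
      simp only [Finset.mem_range] at hj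
      rw [hB (d+1+j) (by omega) (by omega), show d+1+j-d = 1+j from by omega]
    have qmod : ∀ K : ℕ, ∑ j ∈ Finset.range (2*K), ((((1+j) % 2 : ℕ)) : ℤ) = K := by
      intro K
      induction K with
      | zero => simp
      | succ p ih =>
        rw [show 2*(p+1) = 2*p+1+1 from by ring, Finset.sum_range_succ, Finset.sum_range_succ,
          ih, show (1+(2*p)) % 2 = 1 from by omega, show (1+(2*p+1)) % 2 = 0 from by omega]
        push_cast
        ring
    have S2 : ∑ j ∈ Finset.range (2*k), r' (d+1+j) = 2*(k:ℤ)*M - k := by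
      rw [Finset.sum_congr rfl q2, Finset.sum_sub_distrib, Finset.sum_const,
        Finset.card_range, qmod k, nsmul_eq_mul]
      push_cast
      ring
    have hMc : (M:ℤ) = (m:ℤ) + d := by omega
    have hnc : (n:ℤ) = (d:ℤ) + k := by omega
    rw [e1, ← e3, ← e2, p1, p2, p3, hMc, hnc]
    rw [hMc] at S13 S2
    linear_combination S13 + S2
  refine ⟨hstepmem, hups, hub', hex, hlb', hlast', hsum, ?_⟩
  intro r hstepr hnr hcycr hubr hmaxr hlbr hminr hlastr
  have hb := max_bound n M m d hMd hd1 r hstepr hcycr hubr hmaxr hlbr hlastr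
  rw [hsum]
  have hMc : (M:ℤ) = (m:ℤ) + d := by omega
  have hnc : (n:ℤ) = (d:ℤ) + k := by omega
  have heq : 2*(n:ℤ)*m + d*(2*(n:ℤ)) - d*((d:ℤ)-1) - n
      = ((M:ℤ)+m)*((M:ℤ)-m) + (2*(M:ℤ)-1)*((n:ℤ)-M+m) := by
    rw [hMc, hnc]
    ring
  linarith [hb, heq]
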